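/- Set I = log(19)/π and let τ₂ = √(1 - I²) + iI. Let φ(τ) = -(τ - ρ)/(τ - ρ̄) with ρ = e^(πi/3). Then |φ(τ₂)| = (1 - 2√(1 - I²))/|2 + √3·I - √(1 - I²)| and this quantity is at most 1 - π/(2√3). -/

import Mathlib

open Complex Real

set_option maxHeartbeats 1000000

/-- With `I = log(19)/π`, `τ₂ = √(1 - I²) + iI`, and `φ(τ) = -(τ - ρ)/(τ - ρ̄)` where
`ρ = e^(πi/3)`, one has `|φ(τ₂)| = (1 - 2√(1 - I²))/|2 + √3·I - √(1 - I²)|` and this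
quantity is at most `1 - π/(2√3)`. -/
theorem abs_phi_tau2 :
    ‖(-(((Real.sqrt (1 - (Real.log 19 / π) ^ 2) : ℂ)
              + Complex.I * (Real.log 19 / π) - Complex.exp (π * Complex.I / 3)) /
            (((Real.sqrt (1 - (Real.log 19 / π) ^ 2) : ℂ)
              + Complex.I * (Real.log 19 / π))
              - (starRingEnd ℂ) (Complex.exp (π * Complex.I / 3)))))‖
      = (1 - 2 * Real.sqrt (1 - (Real.log 19 / π) ^ 2)) /
          |2 + Real.sqrt 3 * (Real.log 19 / π)
            - Real.sqrt (1 - (Real.log 19 / π) ^ 2)| ∧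
    (1 - 2 * Real.sqrt (1 - (Real.log 19 / π) ^ 2)) /
        |2 + Real.sqrt 3 * (Real.log 19 / π)
          - Real.sqrt (1 - (Real.log 19 / π) ^ 2)|
      ≤ 1 - π / (2 * Real.sqrt 3) := by
  -- numeric bounds
  have hl1 : Real.log 19 < 2.94529 := by
    have h2 : Real.log 2 < 0.6931471808 := Real.log_two_lt_d9
    have hsum := Real.sum_le_exp_of_nonneg (x := 0.1727) (by norm_num) 4
    rw [Finset.sum_range_succ, Finset.sum_range_succ, Finset.sum_range_succ,
      Finset.sum_range_succ, Finset.sum_range_zero] at hsum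
    norm_num [Nat.factorial] at hsum
    have h1916 : Real.log (19/16) ≤ 0.1727 := by
      rw [Real.log_le_iff_le_exp (by norm_num)]; linarith
    have hexp : Real.log 19 = 4 * Real.log 2 + Real.log (19/16) := by
      rw [show (19:ℝ) = 2^4 * (19/16) by norm_num,
        Real.log_mul (by norm_num) (by norm_num), Real.log_pow]
      push_cast; ring
    rw [hexp]; linarith
  have hl0 : (2.94418:ℝ) < Real.log 19 := by
    have h2 : (0.6931471803:ℝ) < Real.log 2 := Real.log_two_gt_d9
    have hb := Real.exp_bound' (x := 0.1716) (by norm_num) (by norm_num) (n := 3) (by norm_num)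
    rw [Finset.sum_range_succ, Finset.sum_range_succ, Finset.sum_range_succ,
      Finset.sum_range_zero] at hb
    norm_num [Nat.factorial] at hb
    have h1916 : (0.1716:ℝ) ≤ Real.log (19/16) := by
      rw [Real.le_log_iff_exp_le (by norm_num)]; linarith
    have hexp : Real.log 19 = 4 * Real.log 2 + Real.log (19/16) := by
      rw [show (19:ℝ) = 2^4 * (19/16) by norm_num,
        Real.log_mul (by norm_num) (by norm_num), Real.log_pow]
      push_cast; ring
    rw [hexp]; linarith
  have hp0 : (3.141592:ℝ) < π := Real.pi_gt_d6
  have hp1 : π < 3.141593 := Real.pi_lt_d6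
  have hppos : (0:ℝ) < π := by linarith
  set L : ℝ := Real.log 19 / π with hLdef
  have hL0 : (0.93716:ℝ) < L := by
    rw [hLdef, lt_div_iff₀ hppos]; nlinarith
  have hL1 : L < 0.93752 := by
    rw [hLdef, div_lt_iff₀ hppos]; nlinarith
  set r : ℝ := Real.sqrt 3 with hrdef
  have hrsq : r * r = 3 := Real.mul_self_sqrt (by norm_num)
  have hrpos : (0:ℝ) < r := Real.sqrt_pos.2 (by norm_num)
  have hr0 : (1.7320508:ℝ) < r := by nlinarith
  have hr1 : r < 1.7320509 := by nlinarith
  set s : ℝ := Real.sqrt (1 - L ^ 2) with hsdef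
  have husq : (0:ℝ) ≤ 1 - L ^ 2 := by nlinarith
  have hssq : s ^ 2 = 1 - L ^ 2 := Real.sq_sqrt husq
  have hsnn : (0:ℝ) ≤ s := Real.sqrt_nonneg _
  have hs0 : (0.3479:ℝ) ≤ s := by
    have : (0.3479:ℝ)^2 ≤ s^2 := by rw [hssq]; nlinarith
    nlinarith
  have hs1 : s ≤ 0.349 := by
    have : s^2 ≤ (0.349:ℝ)^2 := by rw [hssq]; nlinarith
    nlinarith
  -- denominator positivity and abs removal
  have hden : (0:ℝ) < 2 + r * L - s := by nlinarith
  have habs : |2 + r * L - s| = 2 + r * L - s := abs_of_pos hden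
  -- the exponential value
  have hexpval : Complex.exp (π * Complex.I / 3)
      = ((1/2 : ℝ) : ℂ) + ((r/2 : ℝ)) * Complex.I := by
    have h1 : (π : ℂ) * Complex.I / 3 = ((π/3 : ℝ) : ℂ) * Complex.I := by
      push_cast; ring
    rw [h1, Complex.exp_mul_I, ← Complex.ofReal_cos, ← Complex.ofReal_sin,
      Real.cos_pi_div_three, Real.sin_pi_div_three, hrdef]
  have hcast : ((Real.log 19 : ℂ) / (π : ℂ)) = ((L : ℝ) : ℂ) := by
    rw [hLdef]; push_cast; ring
  rw [hcast]
  -- numerator and denominator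
  set N : ℂ := ((s:ℂ) + Complex.I * (L:ℝ)) - Complex.exp (π * Complex.I / 3) with hN
  set D : ℂ := ((s:ℂ) + Complex.I * (L:ℝ)) - (starRingEnd ℂ) (Complex.exp (π * Complex.I / 3)) with hD
  have hNval : N = ((s - 1/2 : ℝ) : ℂ) + ((L - r/2 : ℝ)) * Complex.I := by
    rw [hN, hexpval]; push_cast; ring
  have hDval : D = ((s - 1/2 : ℝ) : ℂ) + ((L + r/2 : ℝ)) * Complex.I := by
    rw [hD, hexpval]; simp only [map_add, map_mul, Complex.conj_ofReal, Complex.conj_I]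
    push_cast; ring
  set A : ℝ := ‖N‖ with hA
  set B : ℝ := ‖D‖ with hB
  have hAnn : 0 ≤ A := norm_nonneg _
  have hBnn : 0 ≤ B := norm_nonneg _
  have hAsq : A ^ 2 = 2 - s - r * L := by
    rw [hA, Complex.sq_norm, hNval, Complex.normSq_add_mul_I]
    linear_combination hssq + (1/4) * hrsq
  have hBsq : B ^ 2 = 2 - s + r * L := by
    rw [hB, Complex.sq_norm, hDval, Complex.normSq_add_mul_I]
    linear_combination hssq + (1/4) * hrsq
  have hB1 : 1 < B ^ 2 := by
    have hLpos : (0:ℝ) < L := by linarith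
    have hrL : 0 < r * L := mul_pos hrpos (by linarith)
    rw [hBsq]; linarith
  have hBpos : 0 < B := by
    by_contra h
    push_neg at h
    have hB0 : B = 0 := le_antisymm h hBnn
    rw [hB0] at hB1; norm_num at hB1
  have hs_half : 2 * s ≤ 1 := by linarith
  have hABsq : (A * B) ^ 2 = (1 - 2 * s) ^ 2 := by
    have : (A * B) ^ 2 = A ^ 2 * B ^ 2 := by ring
    rw [this, hAsq, hBsq]; linear_combination (-3) * hssq - L^2 * hrsq
  have hAB : A * B = 1 - 2 * s := by
    have hfac : (A * B - (1 - 2 * s)) * (A * B + (1 - 2 * s)) = 0 := by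
      linear_combination hABsq
    have hABnn := mul_nonneg hAnn hBnn
    rcases mul_eq_zero.1 hfac with h | h
    · linarith
    · linarith
  constructor
  · rw [norm_neg, norm_div, ← hA, ← hB, habs]
    rw [show (2 : ℝ) + r * L - s = B ^ 2 by rw [hBsq]; ring]
    rw [← hAB]
    field_simp
  · rw [habs]
    have key : (1 - 2 * s) / (2 + r * L - s) ≤ (1 - 2 * 0.3479) / (2 + 1.7320508 * 0.93716 - 0.349) := by
      apply div_le_div₀ (by norm_num) (by linarith) (by norm_num) (by nlinarith)
    have key2 : (1 : ℝ) - 3.141593 / (2 * 1.7320508) ≤ 1 - π / (2 * r) := by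
      have : π / (2 * r) ≤ 3.141593 / (2 * 1.7320508) := by
        apply div_le_div₀ (by norm_num) (by linarith) (by norm_num) (by linarith)
      linarith
    calc (1 - 2 * s) / (2 + r * L - s)
        ≤ (1 - 2 * 0.3479) / (2 + 1.7320508 * 0.93716 - 0.349) := key
      _ ≤ (1 : ℝ) - 3.141593 / (2 * 1.7320508) := by norm_num
      _ ≤ 1 - π / (2 * r) := key2
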